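/- arXiv:1306.0364 — 3 statements merged into one kernel-verified Lean document; each statement's English description precedes it below -/
import Mathlib

section
/- The Carleman series of the Benini distribution converges: Σ_{k=1}^∞ (μ_k)^{-1/(2k)} < ∞, where μ_k is the k-th moment of Ben(β). -/
open Real MeasureTheory Set

theorem benini_carleman_convergent (β : ℝ) (hβ : 0 < β) :
    Summable (fun k : ℕ =>
      (∫ x in Set.Ioi (1 : ℝ),
          x ^ (k + 1) * (2 * β * Real.log x / x * Real.exp (-β * (Real.log x) ^ 2))) ^
        (-(1 : ℝ) / (2 * (k + 1)))) := by
  -- geometric comparison series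
  have hsum : Summable (fun k : ℕ =>
      Real.exp ((β + 1) / 2 - 1 / (8 * β)) * Real.exp (-(1 / (8 * β))) ^ k) := by
    refine Summable.mul_left _ (summable_geometric_of_lt_one (Real.exp_nonneg _) ?_)
    rw [Real.exp_lt_one_iff]
    have : 0 < 1 / (8 * β) := by positivity
    linarith
  refine Summable.of_nonneg_of_le (fun k => ?_) (fun k => ?_) hsum
  · -- nonnegativity of the terms
    apply Real.rpow_nonneg
    apply MeasureTheory.setIntegral_nonneg measurableSet_Ioi
    intro x hx
    have hx1 : (1:ℝ) < x := hx
    have hx0 : (0:ℝ) < x := by linarith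
    have hlog : 0 ≤ Real.log x := Real.log_nonneg hx1.le
    positivity
  · -- the main bound
    set m : ℝ := (k : ℝ) + 1 with hm
    have hm1 : (1:ℝ) ≤ m := by
      have := Nat.cast_nonneg (α := ℝ) k
      rw [hm]; linarith
    have hm0 : (0:ℝ) < m := by linarith
    set c : ℝ := m / (2 * β) with hc
    have hc0 : 0 < c := by positivity
    set f : ℝ → ℝ := fun x =>
      x ^ (k + 1) * (2 * β * Real.log x / x * Real.exp (-β * (Real.log x) ^ 2)) with hf
    set p : ℝ := -(1 : ℝ) / (2 * ((k:ℝ) + 1)) with hp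
    have hp0 : p < 0 := by
      rw [hp]
      apply div_neg_of_neg_of_pos (by norm_num)
      positivity
    have hpm : p = -(1:ℝ) / (2 * m) := by rw [hp, hm]
    -- pointwise lower bound on [exp c, exp (c+1)]
    have hbound : ∀ x ∈ Set.Icc (Real.exp c) (Real.exp (c + 1)),
        m * Real.exp (β * c ^ 2 - β - c - 1) ≤ f x := by
      intro x hx
      have hx0 : 0 < x := lt_of_lt_of_le (Real.exp_pos c) hx.1
      set t : ℝ := Real.log x with ht
      have ht1 : c ≤ t := by
        rw [ht, Real.le_log_iff_exp_le hx0]; exact hx.1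
      have ht2 : t ≤ c + 1 := by
        rw [ht, Real.log_le_iff_le_exp hx0]; exact hx.2
      have hxe : x = Real.exp t := (Real.exp_log hx0).symm
      have hfx : f x = 2 * β * t * Real.exp (m * t - t - β * t ^ 2) := by
        have hsplit : Real.exp (m * t - t - β * t ^ 2)
            = Real.exp ((((k + 1 : ℕ)) : ℝ) * t) * (Real.exp (-t) * Real.exp (-β * t ^ 2)) := by
          rw [← Real.exp_add, ← Real.exp_add]
          congr 1
          push_cast [hm]
          ring
        rw [hf]
        simp only
        rw [hxe, Real.log_exp, ← Real.exp_nat_mul, div_eq_mul_inv, ← Real.exp_neg, hsplit]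
        ring
      rw [hfx]
      have h2bt : m ≤ 2 * β * t := by
        have : m = 2 * β * c := by rw [hc]; field_simp
        nlinarith
      have hexp : Real.exp (β * c ^ 2 - β - c - 1) ≤ Real.exp (m * t - t - β * t ^ 2) := by
        rw [Real.exp_le_exp]
        have hmc : m = 2 * β * c := by rw [hc]; field_simp
        nlinarith [mul_nonneg (sub_nonneg.2 ht1) (sub_nonneg.2 ht2), sq_nonneg (t - c)]
      calc m * Real.exp (β * c ^ 2 - β - c - 1)
          ≤ (2 * β * t) * Real.exp (β * c ^ 2 - β - c - 1) := by
            apply mul_le_mul_of_nonneg_right h2bt (Real.exp_nonneg _)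
        _ ≤ (2 * β * t) * Real.exp (m * t - t - β * t ^ 2) := by
            apply mul_le_mul_of_nonneg_left hexp
            nlinarith
    by_cases hint : IntegrableOn f (Set.Ioi (1:ℝ)) volume
    · -- integrable case: lower bound the integral
      have hsub : Set.Icc (Real.exp c) (Real.exp (c + 1)) ⊆ Set.Ioi (1:ℝ) := by
        intro x hx
        have : (1:ℝ) < Real.exp c := by
          rw [← Real.exp_zero]; exact Real.exp_lt_exp.2 hc0
        exact lt_of_lt_of_le this hx.1
      have hnonneg : 0 ≤ᵐ[volume.restrict (Set.Ioi (1:ℝ))] f := by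
        filter_upwards [ae_restrict_mem measurableSet_Ioi] with x hx
        have hx1 : (1:ℝ) < x := hx
        have hx0 : (0:ℝ) < x := by linarith
        have hlog : 0 ≤ Real.log x := Real.log_nonneg hx1.le
        rw [hf]
        positivity
      have h1 : ∫ x in Set.Icc (Real.exp c) (Real.exp (c+1)), f x ≤ ∫ x in Set.Ioi (1:ℝ), f x :=
        MeasureTheory.setIntegral_mono_set hint hnonneg (HasSubset.Subset.eventuallyLE hsub)
      have h2 : (m * Real.exp (β * c ^ 2 - β - c - 1)) *
            (volume (Set.Icc (Real.exp c) (Real.exp (c+1)))).toReal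
          ≤ ∫ x in Set.Icc (Real.exp c) (Real.exp (c+1)), f x := by
        have := MeasureTheory.setIntegral_ge_of_const_le measurableSet_Icc
          (by rw [Real.volume_Icc]; exact ENNReal.ofReal_ne_top) hbound (hint.mono_set hsub)
        rw [smul_eq_mul, mul_comm] at this
        exact this
      have hvol : (volume (Set.Icc (Real.exp c) (Real.exp (c+1)))).toReal
          = Real.exp (c+1) - Real.exp c := by
        rw [Real.volume_Icc, ENNReal.toReal_ofReal]
        have : Real.exp c ≤ Real.exp (c+1) := Real.exp_le_exp.2 (by linarith)
        linarith
      have hD : Real.exp (β * c ^ 2 - β - 1) ≤ ∫ x in Set.Ioi (1:ℝ), f x := by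
        have hec : Real.exp c ≤ Real.exp (c+1) - Real.exp c := by
          rw [Real.exp_add]
          nlinarith [Real.exp_pos c, Real.exp_one_gt_d9]
        have : Real.exp (β * c ^ 2 - β - 1)
            ≤ (m * Real.exp (β * c ^ 2 - β - c - 1)) * (Real.exp (c+1) - Real.exp c) := by
          have h3 : Real.exp (β * c ^ 2 - β - 1)
              ≤ (m * Real.exp (β * c ^ 2 - β - c - 1)) * Real.exp c := by
            rw [mul_assoc, ← Real.exp_add]
            have : β * c ^ 2 - β - c - 1 + c = β * c ^ 2 - β - 1 := by ring
            rw [this]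
            nlinarith [Real.exp_pos (β * c ^ 2 - β - 1)]
          calc Real.exp (β * c ^ 2 - β - 1)
              ≤ (m * Real.exp (β * c ^ 2 - β - c - 1)) * Real.exp c := h3
            _ ≤ (m * Real.exp (β * c ^ 2 - β - c - 1)) * (Real.exp (c+1) - Real.exp c) := by
                apply mul_le_mul_of_nonneg_left hec
                positivity
        calc Real.exp (β * c ^ 2 - β - 1)
            ≤ (m * Real.exp (β * c ^ 2 - β - c - 1)) * (Real.exp (c+1) - Real.exp c) := this
          _ = (m * Real.exp (β * c ^ 2 - β - c - 1)) *
              (volume (Set.Icc (Real.exp c) (Real.exp (c+1)))).toReal := by rw [hvol]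
          _ ≤ ∫ x in Set.Icc (Real.exp c) (Real.exp (c+1)), f x := h2
          _ ≤ ∫ x in Set.Ioi (1:ℝ), f x := h1
      -- now bound the rpow
      have hIpos : 0 < ∫ x in Set.Ioi (1:ℝ), f x :=
        lt_of_lt_of_le (Real.exp_pos _) hD
      calc (∫ x in Set.Ioi (1:ℝ), f x) ^ p
          ≤ (Real.exp (β * c ^ 2 - β - 1)) ^ p :=
            Real.rpow_le_rpow_of_nonpos (Real.exp_pos _) hD hp0.le
        _ = Real.exp ((β * c ^ 2 - β - 1) * p) := by
            rw [← Real.exp_mul]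
        _ ≤ Real.exp ((β + 1) / 2 - 1 / (8 * β)) * Real.exp (-(1 / (8 * β))) ^ k := by
            rw [← Real.exp_nat_mul, ← Real.exp_add, Real.exp_le_exp]
            have hkm : (k:ℝ) = m - 1 := by rw [hm]; ring
            have hcc : β * c ^ 2 = m ^ 2 / (4 * β) := by
              rw [hc]; field_simp; ring
            have hL : (β * c ^ 2 - β - 1) * p = (β + 1) / (2 * m) - m / (8 * β) := by
              rw [hpm, hcc]; field_simp; ring
            have hR : (β + 1) / 2 - 1 / (8 * β) + (k:ℝ) * (-(1 / (8 * β)))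
                = (β + 1) / 2 - m / (8 * β) := by
              rw [hkm]; field_simp; ring
            rw [hL, hR]
            have hdiv : (β + 1) / (2 * m) ≤ (β + 1) / 2 :=
              div_le_div_of_nonneg_left (by linarith) (by norm_num) (by linarith)
            linarith
        _ = Real.exp ((β + 1) / 2 - 1 / (8 * β)) * Real.exp (-(1 / (8 * β))) ^ k := rfl
    · -- non-integrable case: the integral is zero
      rw [MeasureTheory.integral_undef hint, Real.zero_rpow (ne_of_lt hp0)]
      positivity
end

section
/- For every natural number n, ∫_0^∞ x^n · exp(-x^{1/4}) · sin(x^{1/4}) dx = 0. -/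
open Real MeasureTheory Set

namespace StieltjesAux

open Complex Filter Nat

noncomputable def c : ℂ := 1 - Complex.I

lemma c_ne : c ≠ 0 := by
  simp [c, Complex.ext_iff]

lemma integrable_aux (m : ℕ) :
    IntegrableOn (fun t : ℝ => (t : ℂ) ^ m * Complex.exp (-c * t)) (Ioi 0) := by
  have hint : IntegrableOn (fun t : ℝ => t ^ (m : ℝ) * Real.exp (-1 * t ^ (1 : ℝ)))
      (Ioi 0) := integrableOn_rpow_mul_exp_neg_mul_rpow (lt_of_lt_of_le neg_one_lt_zero (Nat.cast_nonneg m)) one_pos one_pos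
  have hmeas : AEStronglyMeasurable (fun t : ℝ => (t : ℂ) ^ m * Complex.exp (-c * t))
      (volume.restrict (Ioi 0)) := by
    apply Continuous.aestronglyMeasurable
    exact (continuous_ofReal.pow m).mul (Complex.continuous_exp.comp
      (continuous_const.mul continuous_ofReal))
  refine Integrable.mono' hint hmeas ?_
  filter_upwards [ae_restrict_mem measurableSet_Ioi] with t ht
  have ht0 : (0 : ℝ) < t := ht
  rw [norm_mul, norm_pow, Complex.norm_real, Real.norm_eq_abs,
    Complex.norm_exp]
  have h1 : (-c * (t : ℂ)).re = -t := by simp [c]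
  rw [h1, _root_.abs_of_pos ht0, Real.rpow_natCast, Real.rpow_one, neg_one_mul]

lemma tendsto_aux (m : ℕ) :
    Tendsto (fun t : ℝ => (t : ℂ) ^ m * Complex.exp (-c * t)) atTop (nhds 0) := by
  apply squeeze_zero_norm' ?_ (tendsto_pow_mul_exp_neg_atTop_nhds_zero m)
  filter_upwards [eventually_ge_atTop (0 : ℝ)] with t ht
  rw [norm_mul, norm_pow, Complex.norm_real, Real.norm_eq_abs,
    Complex.norm_exp]
  have h1 : (-c * (t : ℂ)).re = -t := by simp [c]
  rw [h1, _root_.abs_of_nonneg ht]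

lemma hasDerivAt_aux (m : ℕ) (t : ℝ) :
    HasDerivAt (fun s : ℝ => (s : ℂ) ^ (m + 1) * Complex.exp (-c * s))
      (((m : ℂ) + 1) * (t : ℂ) ^ m * Complex.exp (-c * t)
        + (t : ℂ) ^ (m + 1) * (-c * Complex.exp (-c * t))) t := by
  have hz : HasDerivAt (fun z : ℂ => z ^ (m + 1) * Complex.exp (-c * z))
      (((m : ℂ) + 1) * (t : ℂ) ^ m * Complex.exp (-c * t)
        + (t : ℂ) ^ (m + 1) * (-c * Complex.exp (-c * t))) (t : ℂ) := by
    have h1 : HasDerivAt (fun z : ℂ => z ^ (m + 1)) (((m : ℂ) + 1) * (t : ℂ) ^ m) (t : ℂ) := by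
      simpa using hasDerivAt_pow (m + 1) (t : ℂ)
    have h2 : HasDerivAt (fun z : ℂ => Complex.exp (-c * z)) (-c * Complex.exp (-c * t)) (t : ℂ) := by
      have := ((hasDerivAt_id (t : ℂ)).const_mul (-c)).cexp
      simpa [mul_comm] using this
    exact h1.mul h2
  exact hz.comp_ofReal

lemma integral_pow_exp (m : ℕ) :
    (∫ t in Ioi (0 : ℝ), (t : ℂ) ^ m * Complex.exp (-c * t))
      = (m ! : ℂ) / c ^ (m + 1) := by
  induction m with
  | zero =>
      have hderiv : ∀ t ∈ Ici (0 : ℝ),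
          HasDerivAt (fun s : ℝ => -c⁻¹ * Complex.exp (-c * s)) (Complex.exp (-c * t)) t := by
        intro t _
        have h2 : HasDerivAt (fun z : ℂ => -c⁻¹ * Complex.exp (-c * z))
            (Complex.exp (-c * t)) (t : ℂ) := by
          have := (((hasDerivAt_id (t : ℂ)).const_mul (-c)).cexp).const_mul (-c⁻¹)
          have hc := c_ne
          refine this.congr_deriv ?_
          field_simp
          rfl
        exact h2.comp_ofReal
      have hint : IntegrableOn (fun t : ℝ => Complex.exp (-c * t)) (Ioi 0) := by
        simpa using integrable_aux 0
      have htend : Tendsto (fun t : ℝ => -c⁻¹ * Complex.exp (-c * t)) atTop (nhds 0) := by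
        have := (tendsto_aux 0).const_mul (-c⁻¹)
        simpa using this
      have := integral_Ioi_of_hasDerivAt_of_tendsto' hderiv hint htend
      simp only [zero_add, pow_one] at this ⊢
      have hrw : (∫ t in Ioi (0 : ℝ), (t : ℂ) ^ 0 * Complex.exp (-c * t))
          = ∫ t in Ioi (0 : ℝ), Complex.exp (-c * t) := by simp
      rw [hrw, this]
      simp [div_eq_mul_inv]
  | succ m ih =>
      have hderiv : ∀ t ∈ Ici (0 : ℝ),
          HasDerivAt (fun s : ℝ => (s : ℂ) ^ (m + 1) * Complex.exp (-c * s))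
            (((m : ℂ) + 1) * (t : ℂ) ^ m * Complex.exp (-c * t)
              + (t : ℂ) ^ (m + 1) * (-c * Complex.exp (-c * t))) t :=
        fun t _ => hasDerivAt_aux m t
      have i1 : IntegrableOn (fun t : ℝ =>
          ((m : ℂ) + 1) * (t : ℂ) ^ m * Complex.exp (-c * t)) (Ioi 0) :=
        ((integrable_aux m).const_mul ((m : ℂ) + 1)).congr
          (Filter.Eventually.of_forall fun t => by ring)
      have i2 : IntegrableOn (fun t : ℝ =>
          (t : ℂ) ^ (m + 1) * (-c * Complex.exp (-c * t))) (Ioi 0) :=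
        ((integrable_aux (m + 1)).const_mul (-c)).congr
          (Filter.Eventually.of_forall fun t => by ring)
      have hint : IntegrableOn (fun t : ℝ =>
          ((m : ℂ) + 1) * (t : ℂ) ^ m * Complex.exp (-c * t)
            + (t : ℂ) ^ (m + 1) * (-c * Complex.exp (-c * t))) (Ioi 0) := i1.add i2
      have htend := tendsto_aux (m + 1)
      have key := integral_Ioi_of_hasDerivAt_of_tendsto' hderiv hint htend
      rw [integral_add i1 i2] at key
      have e1 : (∫ t in Ioi (0 : ℝ), ((m : ℂ) + 1) * (t : ℂ) ^ m * Complex.exp (-c * t))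
          = ((m : ℂ) + 1) * ∫ t in Ioi (0 : ℝ), (t : ℂ) ^ m * Complex.exp (-c * t) := by
        rw [← MeasureTheory.integral_const_mul]
        congr 1; ext t; ring
      have e2 : (∫ t in Ioi (0 : ℝ), (t : ℂ) ^ (m + 1) * (-c * Complex.exp (-c * t)))
          = -c * ∫ t in Ioi (0 : ℝ), (t : ℂ) ^ (m + 1) * Complex.exp (-c * t) := by
        rw [← MeasureTheory.integral_const_mul]
        congr 1; ext t; ring
      rw [e1, e2] at key
      simp only [Complex.ofReal_zero, zero_pow (Nat.succ_ne_zero m), zero_mul, sub_zero] at key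
      have hkey : c * (∫ t in Ioi (0 : ℝ), (t : ℂ) ^ (m + 1) * Complex.exp (-c * t))
          = ((m : ℂ) + 1) * ∫ t in Ioi (0 : ℝ), (t : ℂ) ^ m * Complex.exp (-c * t) := by
        linear_combination -key
      have ih' : (∫ t in Ioi (0 : ℝ), (t : ℂ) ^ m * Complex.exp (-c * t)) * c ^ (m + 1)
          = (m ! : ℂ) := by
        rw [ih, div_mul_cancel₀ _ (pow_ne_zero _ c_ne)]
      rw [eq_div_iff (pow_ne_zero _ c_ne), Nat.factorial_succ]
      push_cast
      linear_combination c ^ (m + 1) * hkey + ((m : ℂ) + 1) * ih'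

lemma sin_integral (n : ℕ) :
    (∫ t in Ioi (0 : ℝ), t ^ (4 * n + 3) * Real.exp (-t) * Real.sin t) = 0 := by
  set m := 4 * n + 3 with hm
  have him : ∀ t : ℝ, 0 < t →
      t ^ m * Real.exp (-t) * Real.sin t = ((t : ℂ) ^ m * Complex.exp (-c * t)).im := by
    intro t _
    have h1 : (-c * (t : ℂ)).re = -t := by simp [c]
    have h2 : (-c * (t : ℂ)).im = t := by simp [c]
    have h3 : ((t : ℂ) ^ m) = ((t ^ m : ℝ) : ℂ) := by push_cast; ring
    rw [h3, Complex.mul_im, Complex.ofReal_re, Complex.ofReal_im, Complex.exp_im, h1, h2,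
      zero_mul, add_zero]
    ring
  have heq : (∫ t in Ioi (0 : ℝ), t ^ m * Real.exp (-t) * Real.sin t)
      = (∫ t in Ioi (0 : ℝ), (t : ℂ) ^ m * Complex.exp (-c * t)).im := by
    have := integral_im (μ := volume.restrict (Ioi 0)) (integrable_aux m)
    simp only [RCLike.im_to_complex] at this
    rw [← this]
    exact setIntegral_congr_fun measurableSet_Ioi fun t ht => him t ht
  rw [heq, integral_pow_exp]
  have hc4 : c ^ (m + 1) = Complex.ofReal ((-4 : ℝ) ^ (n + 1)) := by
    have h4 : c ^ 4 = ((-4 : ℝ) : ℂ) := by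
      simp only [c]
      rw [show (1 - Complex.I) ^ 4 = 1 - 4 * Complex.I + 6 * Complex.I ^ 2
          - 4 * Complex.I ^ 3 + Complex.I ^ 4 by ring]
      simp only [Complex.I_sq]
      rw [show Complex.I ^ 3 = Complex.I ^ 2 * Complex.I by ring,
        show Complex.I ^ 4 = (Complex.I ^ 2) * (Complex.I ^ 2) by ring, Complex.I_sq]
      push_cast
      ring
    have : m + 1 = 4 * (n + 1) := by omega
    rw [this, pow_mul, h4, ← Complex.ofReal_pow]
  rw [hc4, show ((m ! : ℂ)) = Complex.ofReal ((m ! : ℕ) : ℝ) by push_cast; ring,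
    ← Complex.ofReal_div]
  exact Complex.ofReal_im _

end StieltjesAux

theorem stieltjes_vanishing_moments (n : ℕ) :
    (∫ x in Set.Ioi (0 : ℝ),
        x ^ n * Real.exp (-(x ^ ((1 : ℝ) / 4))) * Real.sin (x ^ ((1 : ℝ) / 4))) = 0 := by
  have hsub := integral_comp_rpow_Ioi_of_pos
    (g := fun x : ℝ => x ^ n * Real.exp (-(x ^ ((1 : ℝ) / 4))) * Real.sin (x ^ ((1 : ℝ) / 4)))
    (p := 4) (by norm_num)
  rw [← hsub]
  have hcongr : ∀ t ∈ Ioi (0 : ℝ),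
      (4 * t ^ ((4 : ℝ) - 1)) • ((t ^ (4 : ℝ)) ^ n * Real.exp (-((t ^ (4 : ℝ)) ^ ((1 : ℝ) / 4)))
        * Real.sin ((t ^ (4 : ℝ)) ^ ((1 : ℝ) / 4)))
      = 4 * (t ^ (4 * n + 3) * Real.exp (-t) * Real.sin t) := by
    intro t ht
    have ht0 : (0 : ℝ) < t := ht
    have h1 : (t ^ (4 : ℝ)) ^ ((1 : ℝ) / 4) = t := by
      rw [← Real.rpow_mul ht0.le]
      norm_num
    have h2 : t ^ (4 : ℝ) = t ^ (4 : ℕ) := by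
      rw [show (4 : ℝ) = ((4 : ℕ) : ℝ) by norm_num, Real.rpow_natCast]
    have h3 : t ^ ((4 : ℝ) - 1) = t ^ (3 : ℕ) := by
      rw [show (4 : ℝ) - 1 = ((3 : ℕ) : ℝ) by norm_num, Real.rpow_natCast]
    rw [h1, h2, h3, smul_eq_mul, ← pow_mul]
    ring
  rw [setIntegral_congr_fun measurableSet_Ioi hcongr, MeasureTheory.integral_const_mul,
    StieltjesAux.sin_integral n, mul_zero]
end

section
/- For every natural number k, ∫_1^∞ x^k · exp(-(x-1)^{1/4}) · sin((x-1)^{1/4}) dx = 0. -/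
open Real MeasureTheory Set

namespace ShiftedStieltjesAux

open Filter Topology

lemma norm_aux (m : ℕ) (z : ℂ) {t : ℝ} (ht : 0 ≤ t) :
    ‖(t:ℂ)^m * Complex.exp (-z * t)‖ = t^m * Real.exp (-z.re * t) := by
  rw [norm_mul, norm_pow, Complex.norm_exp,
    Complex.norm_real, Real.norm_eq_abs, abs_of_nonneg ht]
  congr 1
  simp [Complex.mul_re]

lemma integrable_aux (m : ℕ) {z : ℂ} (hz : 0 < z.re) :
    IntegrableOn (fun t : ℝ => (t:ℂ)^m * Complex.exp (-z * t)) (Ioi 0) := by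
  have h := integrableOn_rpow_mul_exp_neg_mul_rpow (s := (m:ℝ)) (p := 1)
    (lt_of_lt_of_le neg_one_lt_zero (Nat.cast_nonneg m)) one_pos hz
  refine Integrable.mono' h ?_ ?_
  · exact (Continuous.aestronglyMeasurable (by continuity)).restrict
  · filter_upwards [ae_restrict_mem measurableSet_Ioi] with t ht
    rw [norm_aux m z (le_of_lt ht)]
    rw [rpow_one, ← rpow_natCast t m]

lemma tendsto_aux (m : ℕ) {z : ℂ} (hz : 0 < z.re) :
    Tendsto (fun t : ℝ => (t:ℂ)^m * Complex.exp (-z * t)) atTop (𝓝 0) := by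
  rw [tendsto_zero_iff_norm_tendsto_zero]
  have h0 : Tendsto (fun u : ℝ => u ^ m * Real.exp (-u)) atTop (𝓝 0) :=
    tendsto_pow_mul_exp_neg_atTop_nhds_zero m
  have h1 : Tendsto (fun t : ℝ => (z.re * t) ^ m * Real.exp (-(z.re * t))) atTop (𝓝 0) :=
    h0.comp (tendsto_id.const_mul_atTop hz)
  have h2 : Tendsto (fun t : ℝ => (1 / z.re ^ m) * ((z.re * t) ^ m * Real.exp (-(z.re * t))))
      atTop (𝓝 0) := by simpa using h1.const_mul (1 / z.re ^ m)
  refine h2.congr' ?_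
  filter_upwards [eventually_ge_atTop (0:ℝ)] with t ht
  rw [norm_aux m z ht, mul_pow]
  field_simp

lemma deriv_aux (m : ℕ) {z : ℂ} (hz : z ≠ 0) (x : ℝ) :
    HasDerivAt (fun t : ℝ => -((t:ℂ)^(m+1) * Complex.exp (-z * t)) / z)
      ((x:ℂ)^(m+1) * Complex.exp (-z * x)
        - ((m+1:ℕ):ℂ)/z * ((x:ℂ)^m * Complex.exp (-z * x))) x := by
  have hC : HasDerivAt (fun w : ℂ => -(w^(m+1) * Complex.exp (-z * w)) / z)
      (-((((m+1:ℕ):ℂ)) * (x:ℂ)^m * Complex.exp (-z * (x:ℂ))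
        + (x:ℂ)^(m+1) * (Complex.exp (-z * (x:ℂ)) * (-z))) / z) (x:ℂ) := by
    have h1 : HasDerivAt (fun w : ℂ => w^(m+1)) (((m+1:ℕ):ℂ) * (x:ℂ)^m) (x:ℂ) := by
      simpa using hasDerivAt_pow (m+1) (x:ℂ)
    have h2 : HasDerivAt (fun w : ℂ => Complex.exp (-z * w))
        (Complex.exp (-z * (x:ℂ)) * (-z)) (x:ℂ) := by
      have := (Complex.hasDerivAt_exp (-z * (x:ℂ))).comp (x:ℂ)
        ((hasDerivAt_id (x:ℂ)).const_mul (-z))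
      simpa [Function.comp_def, mul_comm] using this
    exact ((h1.mul h2).neg).div_const z
  have := hC.comp_ofReal
  convert this using 1
  field_simp
  ring

lemma laplace {z : ℂ} (hz : 0 < z.re) (m : ℕ) :
    ∫ t in Ioi (0:ℝ), (t:ℂ)^m * Complex.exp (-z * t) = (m.factorial : ℂ) / z^(m+1) := by
  have hz0 : z ≠ 0 := fun h => by simp [h] at hz
  induction m with
  | zero =>
    have hderiv : ∀ x ∈ Ioi (0:ℝ),
        HasDerivAt (fun t : ℝ => -Complex.exp (-z * t) / z)
          ((x:ℂ)^0 * Complex.exp (-z * x)) x := by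
      intro x _
      have hC : HasDerivAt (fun w : ℂ => -Complex.exp (-z * w) / z)
          (Complex.exp (-z * (x:ℂ))) (x:ℂ) := by
        have h2 : HasDerivAt (fun w : ℂ => Complex.exp (-z * w))
            (Complex.exp (-z * (x:ℂ)) * (-z)) (x:ℂ) := by
          have := (Complex.hasDerivAt_exp (-z * (x:ℂ))).comp (x:ℂ)
            ((hasDerivAt_id (x:ℂ)).const_mul (-z))
          simpa [Function.comp_def, mul_comm] using this
        have := (h2.neg).div_const z
        convert this using 1
        · rfl
        · rfl
        · rfl
        · field_simp
      simpa using hC.comp_ofReal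
    have hcont : ContinuousWithinAt (fun t : ℝ => -Complex.exp (-z * t) / z)
        (Ici (0:ℝ)) 0 := by
      apply Continuous.continuousWithinAt; continuity
    have htend : Tendsto (fun t : ℝ => -Complex.exp (-z * t) / z) atTop (𝓝 0) := by
      have := ((tendsto_aux 0 hz).neg).div_const z
      simpa using this
    have := integral_Ioi_of_hasDerivAt_of_tendsto hcont hderiv
      (by simpa using integrable_aux 0 hz) htend
    simp only [Complex.ofReal_zero, mul_zero, Complex.exp_zero] at this
    rw [this]
    field_simp
    simp
  | succ m ih =>
    have hderiv := fun x (_ : x ∈ Ioi (0:ℝ)) => deriv_aux m hz0 x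
    have hcont : ContinuousWithinAt
        (fun t : ℝ => -((t:ℂ)^(m+1) * Complex.exp (-z * t)) / z) (Ici (0:ℝ)) 0 := by
      apply Continuous.continuousWithinAt; continuity
    have htend : Tendsto (fun t : ℝ => -((t:ℂ)^(m+1) * Complex.exp (-z * t)) / z)
        atTop (𝓝 0) := by
      have := ((tendsto_aux (m+1) hz).neg).div_const z
      simpa using this
    have hint : IntegrableOn (fun x : ℝ => (x:ℂ)^(m+1) * Complex.exp (-z * x)
        - ((m+1:ℕ):ℂ)/z * ((x:ℂ)^m * Complex.exp (-z * x))) (Ioi 0) :=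
      (integrable_aux (m+1) hz).sub ((integrable_aux m hz).const_mul _)
    have key := integral_Ioi_of_hasDerivAt_of_tendsto hcont hderiv hint htend
    simp only [Complex.ofReal_zero, mul_zero, Complex.exp_zero, mul_one,
      zero_pow (Nat.succ_ne_zero m), zero_mul, neg_zero, zero_div, zero_sub, neg_neg,
      mul_zero] at key
    rw [integral_sub (integrable_aux (m+1) hz) ((integrable_aux m hz).const_mul _),
      integral_const_mul, ih] at key
    have hpow : z ^ (m+1) ≠ 0 := pow_ne_zero _ hz0
    field_simp at key ⊢
    push_cast [Nat.factorial_succ] at key ⊢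
    linear_combination key

lemma sin_moment (n : ℕ) :
    ∫ x in Ioi (0:ℝ), x^(4*n+3) * Real.exp (-x) * Real.sin x = 0 := by
  set z : ℂ := 1 - Complex.I with hzdef
  have hz : 0 < z.re := by simp [hzdef]
  set m := 4*n+3 with hm
  have him : ∀ x : ℝ, ((x:ℂ)^m * Complex.exp (-z * x)).im
      = x^m * Real.exp (-x) * Real.sin x := by
    intro x
    simp [← Complex.ofReal_pow, Complex.exp_im, Complex.mul_im, Complex.mul_re, hzdef]
    ring
  have hint := integrable_aux m hz
  calc ∫ x in Ioi (0:ℝ), x^m * Real.exp (-x) * Real.sin x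
      = ∫ x in Ioi (0:ℝ), ((x:ℂ)^m * Complex.exp (-z * x)).im := by
        refine setIntegral_congr_fun measurableSet_Ioi fun x _ => (him x).symm
    _ = (∫ x in Ioi (0:ℝ), (x:ℂ)^m * Complex.exp (-z * x)).im := integral_im hint
    _ = ((m.factorial : ℂ) / z^(m+1)).im := by rw [laplace hz m]
    _ = 0 := by
        have h4 : z^4 = -4 := by
          have h : z^2 = -2*Complex.I := by
            rw [hzdef, sub_sq, Complex.I_sq]; ring
          rw [show (4:ℕ) = 2*2 from rfl, pow_mul, h, mul_pow, Complex.I_sq]; norm_num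
        have hz4 : z^(m+1) = (((-4:ℝ)^(n+1) : ℝ) : ℂ) := by
          rw [hm, show 4*n+3+1 = 4*(n+1) by ring, pow_mul, h4]
          norm_cast
        rw [hz4, show (m.factorial : ℂ) = ((m.factorial : ℝ) : ℂ) by push_cast; rfl,
          ← Complex.ofReal_div, Complex.ofReal_im]

lemma key_pt (n : ℕ) {x : ℝ} (hx : 0 < x) :
    (|(4:ℝ)| * x^((4:ℝ)-1)) • ((x^(4:ℝ))^n * Real.exp (-((x^(4:ℝ))^((1:ℝ)/4)))
      * Real.sin ((x^(4:ℝ))^((1:ℝ)/4)))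
    = 4 * (x^(4*n+3) * Real.exp (-x) * Real.sin x) := by
  have h14 : (x^(4:ℝ))^((1:ℝ)/4) = x := by
    rw [← rpow_mul hx.le]; norm_num
  have h4 : x^(4:ℝ) = x^(4:ℕ) := by
    rw [show (4:ℝ) = ((4:ℕ):ℝ) by norm_num, rpow_natCast]
  have h3 : x^((4:ℝ)-1) = x^(3:ℕ) := by
    rw [show (4:ℝ)-1 = ((3:ℕ):ℝ) by norm_num, rpow_natCast]
  rw [h14, h3, h4, smul_eq_mul]
  rw [show |(4:ℝ)| = 4 by norm_num]
  ring

lemma integrable_core (n : ℕ) :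
    IntegrableOn (fun y : ℝ => y^n * Real.exp (-(y^((1:ℝ)/4))) * Real.sin (y^((1:ℝ)/4)))
      (Ioi 0) := by
  rw [← integrableOn_Ioi_comp_rpow_iff _ (by norm_num : (4:ℝ) ≠ 0)]
  have hbound := integrableOn_rpow_mul_exp_neg_mul_rpow (s := ((4*n+3:ℕ):ℝ)) (p := 1) (b := 1)
    (lt_of_lt_of_le neg_one_lt_zero (Nat.cast_nonneg _)) one_pos one_pos
  have hF : IntegrableOn (fun x : ℝ => 4 * (x^(4*n+3) * Real.exp (-x) * Real.sin x)) (Ioi 0) := by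
    refine Integrable.mono' (hbound.const_mul 4) ?_ ?_
    · exact (Continuous.aestronglyMeasurable (by continuity)).restrict
    · filter_upwards [ae_restrict_mem measurableSet_Ioi] with x hx
      have hx0 : (0:ℝ) < x := hx
      rw [norm_mul, norm_mul, norm_mul]
      simp only [Real.norm_eq_abs, abs_of_nonneg hx0.le, abs_of_pos (by norm_num : (0:ℝ) < 4),
        abs_of_nonneg (Real.exp_pos _).le, abs_pow]
      rw [rpow_one, rpow_natCast]
      have : |Real.sin x| ≤ 1 := abs_sin_le_one x
      calc 4 * (x^(4*n+3) * Real.exp (-x) * |Real.sin x|)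
          ≤ 4 * (x^(4*n+3) * Real.exp (-x) * 1) := by
            gcongr
        _ = 4 * (x^(4*n+3) * Real.exp (-1 * x)) := by ring_nf
  refine hF.congr_fun (fun x hx => (key_pt n hx).symm) measurableSet_Ioi

lemma core_vanish (n : ℕ) :
    ∫ y in Ioi (0:ℝ), y^n * Real.exp (-(y^((1:ℝ)/4))) * Real.sin (y^((1:ℝ)/4)) = 0 := by
  rw [← integral_comp_rpow_Ioi
    (fun y => y^n * Real.exp (-(y^((1:ℝ)/4))) * Real.sin (y^((1:ℝ)/4)))
    (by norm_num : (4:ℝ) ≠ 0)]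
  rw [setIntegral_congr_fun measurableSet_Ioi (fun x hx => key_pt n hx)]
  rw [MeasureTheory.integral_const_mul, sin_moment n, mul_zero]

end ShiftedStieltjesAux

open ShiftedStieltjesAux in
theorem shifted_stieltjes_vanishing_moments (k : ℕ) :
    (∫ x in Set.Ioi (1 : ℝ),
        x ^ k * Real.exp (-((x - 1) ^ ((1 : ℝ) / 4))) * Real.sin ((x - 1) ^ ((1 : ℝ) / 4))) = 0 := by
  have hmap : Measure.map (fun y : ℝ => y + 1) volume = volume :=
    map_add_right_eq_self volume 1
  have he : MeasurableEmbedding (fun y : ℝ => y + 1) :=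
    (Homeomorph.addRight (1:ℝ)).measurableEmbedding
  rw [← hmap, he.setIntegral_map]
  rw [show (fun y : ℝ => y + 1) ⁻¹' Ioi 1 = Ioi 0 by ext y; simp]
  have hcongr : ∀ y ∈ Ioi (0:ℝ),
      (y+1)^k * Real.exp (-((y+1-1)^((1:ℝ)/4))) * Real.sin ((y+1-1)^((1:ℝ)/4))
      = ∑ i ∈ Finset.range (k+1),
          (k.choose i : ℝ) * (y^i * Real.exp (-(y^((1:ℝ)/4))) * Real.sin (y^((1:ℝ)/4))) := by
    intro y _
    rw [add_sub_cancel_right, add_pow, Finset.sum_mul, Finset.sum_mul]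
    exact Finset.sum_congr rfl fun i _ => by ring
  rw [setIntegral_congr_fun measurableSet_Ioi hcongr]
  rw [integral_finset_sum _ (fun i _ => ((integrable_core i).const_mul _))]
  exact Finset.sum_eq_zero fun i _ => by
    rw [MeasureTheory.integral_const_mul, core_vanish, mul_zero]
end
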